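/- arXiv:2511.03869 — 6 statements merged into one kernel-verified Lean document; each statement's English description precedes it below -/
import Mathlib

section
/- Let S be a restriction semigroup and let σ be the minimum congruence on S identifying all projections. Then a σ b if and only if there exists c ∈ S with c ≤ a and c ≤ b, where ≤ is the natural partial order. -/
/-- A restriction semigroup: an Ehresmann semigroup (a semigroup with a unary
operation `rstar` satisfying `x x* = x`, `x* y* = y* x* = (x* y*)*`, `(xy)* = (x* y)*`)
which additionally satisfies the identity `x* y = y (xy)*`. -/
class RestrictionSemigroup (S : Type*) extends Semigroup S where
  rstar : S → S
  mul_rstar_self : ∀ x : S, x * rstar x = x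
  rstar_comm : ∀ x y : S, rstar x * rstar y = rstar y * rstar x
  rstar_mul_proj : ∀ x y : S, rstar x * rstar y = rstar (rstar x * rstar y)
  rstar_mul : ∀ x y : S, rstar (x * y) = rstar (rstar x * y)
  restriction : ∀ x y : S, rstar x * y = y * rstar (x * y)

open RestrictionSemigroup

variable {S : Type*} [RestrictionSemigroup S]

/-- The natural partial order: `s ≤ t` iff `s = t s*`. -/
def rle (s t : S) : Prop := s = t * rstar s

/-- `r` is a congruence (with respect to multiplication and `*`) identifying all
projections. -/
def IsProjCong (r : S → S → Prop) : Prop :=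
  Equivalence r ∧
  (∀ a b c d : S, r a b → r c d → r (a * c) (b * d)) ∧
  (∀ a b : S, r a b → r (rstar a) (rstar b)) ∧
  (∀ a b : S, r (rstar a) (rstar b))


lemma rstar_rstar (x : S) : rstar (rstar x) = rstar x := by
  have hsq : rstar x * rstar x = rstar x := by
    have h := rstar_mul x (rstar x)
    rw [mul_rstar_self, ← rstar_mul_proj] at h
    exact h.symm
  have h := rstar_mul x (rstar x)
  rw [mul_rstar_self, hsq] at h
  exact h.symm

lemma rle_refl (a : S) : rle a a := (mul_rstar_self a).symm

lemma rle_trans {s t u : S} (h1 : rle s t) (h2 : rle t u) : rle s u := by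
  have hs : rstar s = rstar t * rstar s := by
    conv_lhs => rw [h1]
    rw [rstar_mul, ← rstar_mul_proj]
  show s = u * rstar s
  rw [hs, ← mul_assoc, ← h2]; exact h1

lemma rle_mul {c a d e : S} (h1 : rle c a) (h2 : rle d e) : rle (c * d) (a * e) := by
  have habs : rstar d * rstar (c * d) = rstar (c * d) := by
    calc rstar d * rstar (c * d) = rstar (c * d) * rstar d := rstar_comm d (c * d)
    _ = rstar (rstar (c * d) * rstar d) := rstar_mul_proj (c * d) d
    _ = rstar ((c * d) * rstar d) := (rstar_mul (c * d) (rstar d)).symm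
    _ = rstar (c * (d * rstar d)) := by rw [mul_assoc]
    _ = rstar (c * d) := by rw [mul_rstar_self]
  have key : (a * e) * rstar (c * d) = c * d := by
    calc (a * e) * rstar (c * d) = a * (e * (rstar d * rstar (c * d))) := by
          rw [habs, mul_assoc]
    _ = a * ((e * rstar d) * rstar (c * d)) := by rw [mul_assoc]
    _ = a * (d * rstar (c * d)) := by rw [← h2]
    _ = a * (rstar c * d) := by rw [← restriction]
    _ = (a * rstar c) * d := by rw [mul_assoc]
    _ = c * d := by rw [← h1]
  exact key.symm

lemma rle_rstar {c a : S} (h : rle c a) : rle (rstar c) (rstar a) := by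
  show rstar c = rstar a * rstar (rstar c)
  rw [rstar_rstar]
  conv_lhs => rw [h]
  rw [rstar_mul, ← rstar_mul_proj]

lemma rle_mul_rstar (c d : S) : rle (c * rstar d) c := by
  show c * rstar d = c * rstar (c * rstar d)
  rw [rstar_mul, ← rstar_mul_proj, ← mul_assoc, mul_rstar_self]

lemma rle_swap {c d b : S} (hc : rle c b) (hd : rle d b) : c * rstar d = d * rstar c := by
  calc c * rstar d = (b * rstar c) * rstar d := by rw [← hc]
  _ = b * (rstar c * rstar d) := mul_assoc _ _ _
  _ = b * (rstar d * rstar c) := by rw [rstar_comm]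
  _ = (b * rstar d) * rstar c := (mul_assoc _ _ _).symm
  _ = d * rstar c := by rw [← hd]

/-- `a σ b` (where `σ` is the minimum congruence identifying all projections) iff
there exists `c` with `c ≤ a` and `c ≤ b` in the natural partial order. -/
theorem stmt9 (a b : S) :
    (∀ r : S → S → Prop, IsProjCong r → r a b) ↔ ∃ c : S, rle c a ∧ rle c b := by
  constructor
  · intro h
    refine h (fun x y => ∃ c : S, rle c x ∧ rle c y) ?_
    refine ⟨⟨fun x => ⟨x, rle_refl x, rle_refl x⟩,
      fun ⟨c, h1, h2⟩ => ⟨c, h2, h1⟩,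
      ?_⟩, ?_, ?_, ?_⟩
    · rintro x y z ⟨c, hcx, hcy⟩ ⟨d, hdy, hdz⟩
      refine ⟨c * rstar d, rle_trans (rle_mul_rstar c d) hcx, ?_⟩
      rw [rle_swap hcy hdy]
      exact rle_trans (rle_mul_rstar d c) hdz
    · rintro x y z w ⟨c, h1, h2⟩ ⟨d, h3, h4⟩
      exact ⟨c * d, rle_mul h1 h3, rle_mul h2 h4⟩
    · rintro x y ⟨c, h1, h2⟩
      exact ⟨rstar c, rle_rstar h1, rle_rstar h2⟩
    · intro x y
      refine ⟨rstar x * rstar y, rle_mul_rstar (rstar x) y, ?_⟩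
      rw [rstar_comm]
      have := rle_mul_rstar (rstar y) (rstar x)
      rwa [rstar_rstar] at this
  · rintro ⟨c, hca, hcb⟩ r ⟨heq, hmul, _, hproj⟩
    have hra : r c a := by
      have := hmul a a (rstar c) (rstar a) (heq.refl a) (hproj c a)
      rwa [← hca, mul_rstar_self] at this
    have hrb : r c b := by
      have := hmul b b (rstar c) (rstar b) (heq.refl b) (hproj c b)
      rwa [← hcb, mul_rstar_self] at this
    exact heq.trans (heq.symm hra) hrb
end

section
/- In a restriction semigroup, if s₁, ..., sₙ (n ≥ 1) are pairwise compatible, then their meet with respect to the natural partial order exists and equals sᵢ·e for each i, where e = s₁* s₂* ⋯ sₙ*. -/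
open RestrictionSemigroup

variable {S : Type*} [RestrictionSemigroup S]

lemma rstar_idem (x : S) : rstar x * rstar x = rstar x := by
  have h := rstar_mul x (rstar x)
  rw [mul_rstar_self] at h
  rw [rstar_mul_proj, ← h]

lemma foldl_push_left (l : List S) (b p : S) :
    p * l.foldl (fun b x => b * rstar x) b = l.foldl (fun b x => b * rstar x) (p * b) := by
  induction l generalizing b with
  | nil => rfl
  | cons y l ih => simp only [List.foldl_cons, ih, mul_assoc]

lemma foldl_push_right (l : List S) (b x : S) :
    (l.foldl (fun b x => b * rstar x) b) * rstar x
      = l.foldl (fun b x => b * rstar x) (b * rstar x) := by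
  induction l generalizing b with
  | nil => rfl
  | cons y l ih =>
      simp only [List.foldl_cons]
      rw [ih, mul_assoc, mul_assoc, rstar_comm]

lemma foldl_rstar (l : List S) (b : S) (hb : rstar b = b) :
    rstar (l.foldl (fun b x => b * rstar x) b) = l.foldl (fun b x => b * rstar x) b := by
  induction l generalizing b with
  | nil => exact hb
  | cons y l ih =>
      simp only [List.foldl_cons]
      refine ih _ ?_
      calc rstar (b * rstar y) = rstar (rstar b * rstar y) := rstar_mul b (rstar y)
        _ = rstar b * rstar y := (rstar_mul_proj b y).symm
        _ = b * rstar y := by rw [hb]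

lemma foldl_absorb (l : List S) (b x : S) (hx : x ∈ l) :
    (l.foldl (fun b x => b * rstar x) b) * rstar x = l.foldl (fun b x => b * rstar x) b := by
  induction l generalizing b with
  | nil => cases hx
  | cons y l ih =>
      simp only [List.foldl_cons]
      rcases List.mem_cons.mp hx with rfl | hx
      · rw [foldl_push_right, mul_assoc, rstar_idem]
      · exact ih _ hx

lemma foldl_const (l : List S) (t : S) (ht : ∀ x ∈ l, t * rstar x = t) :
    l.foldl (fun b x => b * rstar x) t = t := by
  induction l with
  | nil => rfl
  | cons y l ih =>
      simp only [List.foldl_cons]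
      rw [ht y List.mem_cons_self]
      exact ih fun x hx => ht x (List.mem_cons_of_mem _ hx)

/-- If `s₁, …, sₙ` (`n ≥ 1`, here the nonempty list `a :: l`) are pairwise
compatible, then their meet with respect to the natural partial order exists and
equals `sᵢ e` for each `i`, where `e = s₁* s₂* ⋯ sₙ*`. -/
theorem stmt12 (a : S) (l : List S)
    (hcomp : ∀ x ∈ a :: l, ∀ y ∈ a :: l, x * rstar y = y * rstar x)
    (e : S) (he : e = l.foldl (fun b x => b * rstar x) (rstar a)) :
    ∀ x ∈ a :: l,
      (∀ y ∈ a :: l, rle (x * e) y) ∧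
      (∀ t : S, (∀ y ∈ a :: l, rle t y) → rle t (x * e)) := by
  have hestar : rstar e = e := by
    rw [he]; exact foldl_rstar l _ (rstar_rstar a)
  have habs : ∀ y ∈ a :: l, e * rstar y = e := by
    intro y hy
    rcases List.mem_cons.mp hy with rfl | hy
    · rw [he, foldl_push_right, rstar_idem]
    · rw [he]; exact foldl_absorb l _ y hy
  have habs' : ∀ y ∈ a :: l, rstar y * e = e := by
    intro y hy
    calc rstar y * e = rstar y * rstar e := by rw [hestar]
      _ = rstar e * rstar y := rstar_comm y e
      _ = e * rstar y := by rw [hestar]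
      _ = e := habs y hy
  intro x hx
  constructor
  · intro y hy
    unfold rle
    have hst : rstar (x * e) = rstar x * e := by
      rw [rstar_mul]
      conv_lhs => rw [← hestar]
      rw [← rstar_mul_proj, hestar]
    rw [hst, ← mul_assoc, ← hcomp x hx y hy, mul_assoc, habs' y hy]
  · intro t ht
    unfold rle
    have habs_t : ∀ y ∈ a :: l, t * rstar y = t := by
      intro y hy
      have h := ht y hy
      unfold rle at h
      calc t * rstar y = y * rstar t * rstar y := by rw [← h]
        _ = y * (rstar t * rstar y) := mul_assoc _ _ _
        _ = y * (rstar y * rstar t) := by rw [rstar_comm]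
        _ = y * rstar y * rstar t := (mul_assoc _ _ _).symm
        _ = y * rstar t := by rw [mul_rstar_self]
        _ = t := h.symm
    have hte : t * e = t := by
      rw [he, foldl_push_left, habs_t a List.mem_cons_self]
      exact foldl_const l t fun y hy => habs_t y (List.mem_cons_of_mem _ hy)
    have htx := ht x hx
    unfold rle at htx
    calc t = t * e := hte.symm
      _ = x * rstar t * e := by rw [← htx]
      _ = x * (rstar t * e) := mul_assoc _ _ _
      _ = x * (rstar t * rstar e) := by rw [hestar]
      _ = x * (rstar e * rstar t) := by rw [rstar_comm]
      _ = x * (e * rstar t) := by rw [hestar]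
      _ = x * e * rstar t := (mul_assoc _ _ _).symm
end

section
/- A restriction semigroup S is proper (s σ t and s* = t* imply s = t) if and only if the compatibility relation ⌣ coincides with the minimum reduced congruence σ. -/
open RestrictionSemigroup

variable {S : Type*} [RestrictionSemigroup S]

/-- The minimum congruence identifying all projections. -/
def sigmaRel (a b : S) : Prop := ∀ r : S → S → Prop, IsProjCong r → r a b

lemma sigma_refl (a : S) : sigmaRel a a := fun _ hr => hr.1.refl a

lemma sigma_symm {a b : S} (h : sigmaRel a b) : sigmaRel b a :=
  fun r hr => hr.1.symm (h r hr)

lemma sigma_trans {a b c : S} (h1 : sigmaRel a b) (h2 : sigmaRel b c) : sigmaRel a c :=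
  fun r hr => hr.1.trans (h1 r hr) (h2 r hr)

lemma sigma_mul {a b c d : S} (h1 : sigmaRel a b) (h2 : sigmaRel c d) :
    sigmaRel (a * c) (b * d) := fun r hr => hr.2.1 a b c d (h1 r hr) (h2 r hr)

lemma sigma_proj (a b : S) : sigmaRel (rstar a) (rstar b) := fun _ hr => hr.2.2.2 a b

/-- `s * t*` is σ-related to `s`. -/
lemma sigma_mul_rstar (s t : S) : sigmaRel (s * rstar t) s := by
  have h := sigma_mul (sigma_refl s) (sigma_proj t s)
  rwa [mul_rstar_self] at h

lemma rstar_mul_rstar (s t : S) : rstar (s * rstar t) = rstar s * rstar t := by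
  rw [rstar_mul, ← rstar_mul_proj]

/-- A restriction semigroup is proper iff the compatibility relation coincides
with the minimum reduced congruence `σ`. -/
theorem stmt13 (S : Type*) [RestrictionSemigroup S] :
    (∀ s t : S, sigmaRel s t → rstar s = rstar t → s = t) ↔
    (∀ s t : S, s * rstar t = t * rstar s ↔ sigmaRel s t) := by
  constructor
  · intro hP s t
    constructor
    · intro h
      exact sigma_trans (sigma_symm (sigma_mul_rstar s t))
        (h ▸ sigma_mul_rstar t s)
    · intro hσ
      apply hP
      · exact sigma_trans (sigma_mul_rstar s t)
          (sigma_trans hσ (sigma_symm (sigma_mul_rstar t s)))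
      · rw [rstar_mul_rstar, rstar_mul_rstar, rstar_comm]
  · intro h s t hσ he
    have hc := (h s t).mpr hσ
    rwa [he, mul_rstar_self, ← he, mul_rstar_self] at hc
end

section
/- Let S be a restriction semigroup with local units acting on its character space: for s ∈ S, β_s is the partial map with domain D_{s*} = {φ : φ(s*) = 1} defined by β_s(φ)(e) = φ((es)*). Then β_s(φ) is a character (nonzero and meet-preserving), and β is a (·, *)-morphism: β_{st} = β_s ∘ β_t (with equal domains) and β_{t*} equals the identity map on the domain of β_t. -/
open RestrictionSemigroup

variable {S : Type*} [RestrictionSemigroup S]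

/-- `e t = t (e t)*` for a projection `e`. -/
lemma proj_act {e : S} (he : rstar e = e) (t : S) : e * t = t * rstar (e * t) := by
  conv_lhs => rw [← he]
  rw [restriction]

/-- Key lemma: `(es)* (fs)* = (e f s)*` for projections `e`, `f`. -/
lemma rstar_meet {e f : S} (he : rstar e = e) (hf : rstar f = f) (s : S) :
    rstar (e * s) * rstar (f * s) = rstar (e * (f * s)) := by
  have h1 : rstar (e * s) * rstar (f * s)
      = rstar (rstar (e * s) * rstar (f * s)) := rstar_mul_proj _ _
  have h2 : rstar (rstar (e * s) * rstar (f * s))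
      = rstar ((e * s) * rstar (f * s)) := (rstar_mul (e * s) (rstar (f * s))).symm
  have h3 : (e * s) * rstar (f * s) = e * (f * s) := by
    rw [mul_assoc, ← proj_act hf s]
  rw [h1, h2, h3]

/-- `(st)* = t* (st)*`. -/
lemma rstar_le_dom (s t : S) : rstar (s * t) = rstar t * rstar (s * t) := by
  have h1 : rstar (s * t) = rstar (rstar s * t) := rstar_mul s t
  have h2 : rstar s * t = t * rstar (s * t) := restriction s t
  have h3 : rstar (s * t) = rstar (t * rstar (s * t)) := by
    conv_lhs => rw [h1, h2]
  calc rstar (s * t) = rstar (t * rstar (s * t)) := h3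
    _ = rstar (rstar t * rstar (s * t)) := rstar_mul t (rstar (s * t))
    _ = rstar t * rstar (s * t) := (rstar_mul_proj t (s * t)).symm


/-- A character of the projection semilattice `P(S)` of `S`: a nonzero
(`Prop`-valued) meet-semilattice morphism on the projections (the meet of
projections being their product). -/
def IsProjChar (φ : S → Prop) : Prop :=
  (∃ e : S, rstar e = e ∧ φ e) ∧
  ∀ e f : S, rstar e = e → rstar f = f → (φ (e * f) ↔ φ e ∧ φ f)

/-- The spectral action: `β_s(φ)(e) = φ((es)*)`, defined on the domain
`D_{s*} = {φ : φ(s*) = 1}`. -/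
def beta (s : S) (φ : S → Prop) : S → Prop := fun e => φ (rstar (e * s))

/-- For a restriction semigroup `S` with local units, the spectral action is well
defined and is a `(·, *)`-morphism: `β_s(φ)` is a character whenever `φ` is a
character in `D_{s*}`; `β_{st} = β_s ∘ β_t` with equal domains; and `β_{t*}`
is the identity map on the domain `D_{t*}` of `β_t`. -/
theorem stmt16
    (hlu : ∀ s : S, ∃ e f : S, rstar e = e ∧ rstar f = f ∧ e * s = s ∧ s * f = s) :
    -- β_s(φ) is a character (nonzero and meet-preserving)
    (∀ s : S, ∀ φ : S → Prop, IsProjChar φ → φ (rstar s) → IsProjChar (beta s φ)) ∧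
    -- equal domains: φ ∈ dom(β_{st}) iff φ ∈ dom(β_t) and β_t(φ) ∈ dom(β_s)
    (∀ s t : S, ∀ φ : S → Prop, IsProjChar φ →
      (φ (rstar (s * t)) ↔ φ (rstar t) ∧ beta t φ (rstar s))) ∧
    -- β_{st} = β_s ∘ β_t on the common domain (as functions on projections)
    (∀ s t : S, ∀ φ : S → Prop, IsProjChar φ → φ (rstar (s * t)) →
      ∀ e : S, rstar e = e → (beta (s * t) φ e ↔ beta s (beta t φ) e)) ∧
    -- β_{t*} is the identity on the domain of β_t
    (∀ t : S, ∀ φ : S → Prop, IsProjChar φ → φ (rstar t) →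
      ∀ e : S, rstar e = e → (beta (rstar t) φ e ↔ φ e)) := by
  refine ⟨?_, ?_, ?_, ?_⟩
  · intro s φ hφ hdom
    constructor
    · obtain ⟨e, f, he, hf, hes, hsf⟩ := hlu s
      exact ⟨e, he, by simpa [beta, hes] using hdom⟩
    · intro e f he hf
      have key : rstar (e * f * s) = rstar (e * s) * rstar (f * s) := by
        rw [mul_assoc]; exact (rstar_meet he hf s).symm
      simp only [beta, key]
      exact hφ.2 _ _ (rstar_rstar _) (rstar_rstar _)
  · intro s t φ hφ
    have hb : beta t φ (rstar s) = φ (rstar (s * t)) := by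
      simp only [beta]; rw [← rstar_mul]
    rw [hb]
    constructor
    · intro h
      refine ⟨?_, h⟩
      have := rstar_le_dom s t
      have h2 : φ (rstar t * rstar (s * t)) := by rw [← this]; exact h
      exact ((hφ.2 _ _ (rstar_rstar t) (rstar_rstar (s * t))).mp h2).1
    · exact fun h => h.2
  · intro s t φ _ _ e _
    simp only [beta]
    rw [← mul_assoc, ← rstar_mul (e * s) t]
  · intro t φ hφ hdom e he
    have h1 : rstar (e * rstar t) = e * rstar t := by
      rw [rstar_mul, ← rstar_mul_proj, he]
    simp only [beta, h1]
    constructor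
    · intro h
      exact ((hφ.2 e (rstar t) he (rstar_rstar t)).mp h).1
    · intro h
      exact (hφ.2 e (rstar t) he (rstar_rstar t)).mpr ⟨h, hdom⟩
end

section
/- Let E be a meet-semilattice and let 𝒜 be the collection of subsets of the character space of E of the form ⋃_{e∈Y} D_e for Y ⊆ E. The map Ψ : 𝒜 → {order ideals of E} given by Ψ(A) = {f ∈ E : D_f ⊆ A} is a bijection, with inverse I ↦ ⋃_{e∈I} D_e. -/
variable {E : Type*} [SemilatticeInf E]

/-- A character of a meet-semilattice `E`: a nonzero (`{0,1}`-valued, here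
`Prop`-valued) meet-semilattice morphism. -/
def IsChar (φ : E → Prop) : Prop :=
  (∃ x : E, φ x) ∧ ∀ a b : E, φ (a ⊓ b) ↔ φ a ∧ φ b

/-- `D_e`: the set of characters `φ` with `φ e = 1`. -/
def Dset (e : E) : Set {φ : E → Prop // IsChar φ} := {φ | φ.1 e}

/-- An order ideal of `E`: a downward closed subset. -/
def IsOrderIdealSet (I : Set E) : Prop := ∀ e ∈ I, ∀ f : E, f ≤ e → f ∈ I

/-- The principal-filter character `χ_f`. -/
def princChar (f : E) : {φ : E → Prop // IsChar φ} :=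
  ⟨fun x => f ≤ x, ⟨f, le_refl f⟩, fun a b => le_inf_iff⟩

lemma princChar_mem {f e : E} : princChar f ∈ Dset e ↔ f ≤ e := Iff.rfl

lemma Dset_mono {f e : E} (h : f ≤ e) : Dset f ⊆ (Dset e : Set _) := by
  intro φ hφ
  have := (φ.2.2 f e).mp
  have hfe : φ.1 (f ⊓ e) := by rwa [inf_eq_left.mpr h]
  exact (this hfe).2

/-- The map `Ψ : A ↦ {f : D_f ⊆ A}`, from the collection of subsets of the
character space of the form `⋃_{e ∈ Y} D_e`, is a bijection onto the set of
order ideals of `E`, with inverse `I ↦ ⋃_{e ∈ I} D_e`. -/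
theorem stmt18 :
    (∀ A : Set {φ : E → Prop // IsChar φ},
      (∃ Y : Set E, A = ⋃ e ∈ Y, Dset e) → IsOrderIdealSet {f : E | Dset f ⊆ A}) ∧
    (∀ A : Set {φ : E → Prop // IsChar φ},
      (∃ Y : Set E, A = ⋃ e ∈ Y, Dset e) → (⋃ e ∈ {f : E | Dset f ⊆ A}, Dset e) = A) ∧
    (∀ I : Set E, IsOrderIdealSet I →
      {f : E | Dset f ⊆ ⋃ e ∈ I, Dset e} = I) := by
  refine ⟨?_, ?_, ?_⟩
  · rintro A - e he f hfe
    exact (Dset_mono hfe).trans he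
  · rintro A ⟨Y, rfl⟩
    apply Set.Subset.antisymm
    · intro φ hφ
      simp only [Set.mem_iUnion, Set.mem_setOf_eq] at hφ
      obtain ⟨f, hf, hφf⟩ := hφ
      exact hf hφf
    · intro φ hφ
      have hφ' := hφ
      simp only [Set.mem_iUnion] at hφ'
      obtain ⟨e, heY, hφe⟩ := hφ'
      simp only [Set.mem_iUnion, Set.mem_setOf_eq]
      exact ⟨e, fun ψ hψ => Set.mem_iUnion₂.mpr ⟨e, heY, hψ⟩, hφe⟩
  · intro I hI
    apply Set.Subset.antisymm
    · intro f hf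
      have := hf (princChar_mem.mpr (le_refl f))
      simp only [Set.mem_iUnion] at this
      obtain ⟨e, heI, hfe⟩ := this
      exact hI e heI f (princChar_mem.mp hfe)
    · intro e heI φ hφ
      exact Set.mem_iUnion₂.mpr ⟨e, heI, hφ⟩
end

section
/- Let S be a proper restriction semigroup, T a monoid, and suppose S is built as the set of pairs {(t,e) : t ∈ T, e ∈ E, e ⊆ dom(α_t)} for a proper partial action α of T on a space X with semilattice E of subsets, with operations (s,e)(t,f) = (st, α_t⁻¹(e) ∩ f) and (s,e)* = (1,e). Then the relation (t,e) σ (s,f) iff t = s is precisely the minimum reduced congruence, and the resulting restriction semigroup is proper: (t,e) σ (s,f) together with (t,e)* = (s,f)* implies (t,e) = (s,f). -/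
/-- The data of a partial action of a monoid `T` on a set `X`: a domain
`dom t ⊆ X` and a map `act t` for each `t ∈ T`. -/
structure PartialActionData (T X : Type*) where
  dom : T → Set X
  act : T → X → X

/-- `α` is a partial action: `α_1 = id_X` and `α_s ∘ α_t ≤ α_{st}` as partial
maps. -/
def IsPartialAction {T X : Type*} [Monoid T] (α : PartialActionData T X) : Prop :=
  α.dom 1 = Set.univ ∧ (∀ x : X, α.act 1 x = x) ∧
  ∀ s t : T, ∀ x ∈ α.dom t, α.act t x ∈ α.dom s →
    x ∈ α.dom (s * t) ∧ α.act (s * t) x = α.act s (α.act t x)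

/-- `α` is proper with respect to `E`: each `dom α_t` is the union of the
members of `E` contained in it, and `α_t⁻¹(f) ∩ e ∈ E` whenever `e ∈ E`,
`e ⊆ dom α_t` and `f ∈ E`. -/
def IsProperAction {T X : Type*} [Monoid T] (α : PartialActionData T X)
    (E : Set (Set X)) : Prop :=
  (∀ t : T, α.dom t = ⋃₀ {e ∈ E | e ⊆ α.dom t}) ∧
  (∀ t : T, ∀ e ∈ E, e ⊆ α.dom t → ∀ f ∈ E, {x | x ∈ e ∧ α.act t x ∈ f} ∈ E)

/-- The carrier of the partial action product: pairs `(t, e)` with `e ∈ E` and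
`e ⊆ dom α_t`. -/
def Car {T X : Type*} [Monoid T] (α : PartialActionData T X) (E : Set (Set X)) :
    Set (T × Set X) :=
  {p | p.2 ∈ E ∧ p.2 ⊆ α.dom p.1}

/-- The product `(s, e)(t, f) = (st, α_t⁻¹(e) ∩ f)`. -/
def pmul {T X : Type*} [Monoid T] (α : PartialActionData T X)
    (p q : T × Set X) : T × Set X :=
  (p.1 * q.1, {x | x ∈ q.2 ∧ α.act q.1 x ∈ p.2})

/-- The unary operation `(s, e)* = (1, e)`. -/
def pstar {T X : Type*} [Monoid T] (p : T × Set X) : T × Set X := (1, p.2)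

/-- `r` is a congruence on the carrier (with respect to the product and `*`)
identifying all projections. -/
def IsProjCongOn {T X : Type*} [Monoid T] (α : PartialActionData T X)
    (E : Set (Set X)) (r : T × Set X → T × Set X → Prop) : Prop :=
  (∀ p ∈ Car α E, r p p) ∧
  (∀ p q : T × Set X, r p q → r q p) ∧
  (∀ p q u : T × Set X, r p q → r q u → r p u) ∧
  (∀ p q p' q' : T × Set X, p ∈ Car α E → q ∈ Car α E → p' ∈ Car α E →
    q' ∈ Car α E → r p p' → r q q' → r (pmul α p q) (pmul α p' q')) ∧
  (∀ p q : T × Set X, p ∈ Car α E → q ∈ Car α E → r p q →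
    r (pstar (T := T) (X := X) p) (pstar q)) ∧
  (∀ p q : T × Set X, p ∈ Car α E → q ∈ Car α E →
    r (pstar (T := T) (X := X) p) (pstar q))

/-- For the partial action product `S = {(t, e) : e ∈ E, e ⊆ dom α_t}` of a
proper partial action, the relation `(t, e) σ (s, f) ↔ t = s` is precisely the
minimum reduced congruence (it is a congruence identifying all projections, and
is contained in every such congruence), and the resulting restriction semigroup
is proper: `(t,e) σ (s,f)` and `(t,e)* = (s,f)*` imply `(t,e) = (s,f)`. -/
theorem stmt19 {T X : Type*} [Monoid T] (α : PartialActionData T X)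
    (E : Set (Set X)) (hE : ∀ e ∈ E, ∀ f ∈ E, e ∩ f ∈ E)
    (hact : IsPartialAction α) (hproper : IsProperAction α E) :
    IsProjCongOn α E (fun p q => p.1 = q.1) ∧
    (∀ r : T × Set X → T × Set X → Prop, IsProjCongOn α E r →
      ∀ p ∈ Car α E, ∀ q ∈ Car α E, p.1 = q.1 → r p q) ∧
    (∀ p ∈ Car α E, ∀ q ∈ Car α E, p.1 = q.1 →
      pstar (T := T) (X := X) p = pstar q → p = q) := by
  obtain ⟨hdom1, hact1, hcomp⟩ := hact
  refine ⟨⟨fun p _ => rfl, fun p q h => h.symm, fun p q u h1 h2 => h1.trans h2,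
    fun p q p' q' _ _ _ _ h1 h2 => by simp [pmul, h1, h2],
    fun p q _ _ _ => rfl, fun p q _ _ => rfl⟩, ?_, ?_⟩
  · intro r hr p hp q hq hpq
    obtain ⟨hrefl, hsymm, htrans, hmul, _, hproj⟩ := hr
    have hsp : pstar (T := T) (X := X) p ∈ Car α E :=
      ⟨hp.1, by rw [pstar, hdom1]; exact Set.subset_univ _⟩
    have hsq : pstar (T := T) (X := X) q ∈ Car α E :=
      ⟨hq.1, by rw [pstar, hdom1]; exact Set.subset_univ _⟩
    have h1 : r (pmul α p (pstar p)) (pmul α p (pstar q)) :=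
      hmul _ _ _ _ hp hsp hp hsq (hrefl p hp) (hproj p q hp hq)
    have h2 : r (pmul α q (pstar p)) (pmul α q (pstar q)) :=
      hmul _ _ _ _ hq hsp hq hsq (hrefl q hq) (hproj p q hp hq)
    have e1 : pmul α p (pstar p) = p :=
      Prod.ext (mul_one _) (Set.ext fun x => by simp [pmul, pstar, hact1])
    have e2 : pmul α p (pstar q) = pmul α q (pstar p) :=
      Prod.ext (by simp [pmul, pstar, hpq])
        (Set.ext fun x => by simp [pmul, pstar, hact1, and_comm])
    have e3 : pmul α q (pstar q) = q :=
      Prod.ext (mul_one _) (Set.ext fun x => by simp [pmul, pstar, hact1])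
    rw [e1, e2] at h1
    rw [e3] at h2
    exact htrans _ _ _ h1 h2
  · intro p hp q hq h1 h2
    exact Prod.ext h1 (by simpa [pstar, Prod.ext_iff] using h2)
end
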